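/- For F(X) = (1/2)‖X‖², the unique minimizer of X ↦ ∑ᵢ δ_F(X, Xᵢ) over Hermitian matrices is the total-square-loss mean X̄_TSL = (∑ᵢ Xᵢ/√(1+‖Xᵢ‖²)) / (∑ⱼ 1/√(1+‖Xⱼ‖²)), a convex combination of X₁,…,X_m; in particular X̄_TSL is Hermitian positive-definite when all Xᵢ are. -/

import Mathlib

open Matrix
open scoped ComplexOrder

attribute [local instance] Matrix.frobeniusNormedAddCommGroup Matrix.frobeniusNormedSpace

/-- Real inner product giving the Frobenius norm. -/
noncomputable def tslInner {N : ℕ} (A C : Matrix (Fin N) (Fin N) ℂ) : ℝ :=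
  ∑ i, ∑ j, (starRingEnd ℂ (A i j) * C i j).re

lemma tslInner_self {N : ℕ} (A : Matrix (Fin N) (Fin N) ℂ) : ‖A‖ ^ 2 = tslInner A A := by
  have h1 : ‖A‖ ^ 2 = ∑ i, ∑ j, ‖A i j‖ ^ 2 := by
    rw [frobenius_norm_def, ← Real.rpow_natCast _ 2, ← Real.rpow_mul (by positivity)]
    push_cast
    norm_num
  rw [h1]
  refine Finset.sum_congr rfl fun i _ => Finset.sum_congr rfl fun j _ => ?_
  rw [← Complex.normSq_eq_conj_mul_self, Complex.ofReal_re, Complex.sq_norm]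

lemma tslInner_comm {N : ℕ} (A C : Matrix (Fin N) (Fin N) ℂ) : tslInner A C = tslInner C A := by
  refine Finset.sum_congr rfl fun i _ => Finset.sum_congr rfl fun j _ => ?_
  simp [Complex.mul_re]
  ring

lemma tslInner_add_right {N : ℕ} (A C D : Matrix (Fin N) (Fin N) ℂ) :
    tslInner A (C + D) = tslInner A C + tslInner A D := by
  simp [tslInner, mul_add, Finset.sum_add_distrib]

lemma tslInner_zero_right {N : ℕ} (A : Matrix (Fin N) (Fin N) ℂ) : tslInner A 0 = 0 := by
  simp [tslInner]

lemma tslInner_smul_right {N : ℕ} (r : ℝ) (A C : Matrix (Fin N) (Fin N) ℂ) :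
    tslInner A (r • C) = r * tslInner A C := by
  simp [tslInner, Finset.mul_sum, Complex.real_smul, Complex.mul_re]
  ring_nf
  refine Finset.sum_congr rfl fun i _ => Finset.sum_congr rfl fun j _ => ?_
  ring

lemma tslInner_sum_right {N : ℕ} {ι : Type*} (s : Finset ι) (A : Matrix (Fin N) (Fin N) ℂ)
    (f : ι → Matrix (Fin N) (Fin N) ℂ) :
    tslInner A (∑ k ∈ s, f k) = ∑ k ∈ s, tslInner A (f k) := by
  classical
  induction s using Finset.induction with
  | empty => simp [tslInner_zero_right]
  | insert _ _ h ih => simp [Finset.sum_insert h, tslInner_add_right, ih]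

/-- The weighted variance decomposition. -/
lemma tsl_key {N m : ℕ} (w : Fin m → ℝ) (Xs : Fin m → Matrix (Fin N) (Fin N) ℂ)
    (Y Xbar : Matrix (Fin N) (Fin N) ℂ) (h0 : ∑ i, w i • (Xbar - Xs i) = 0) :
    ∑ i, w i * ‖Y - Xs i‖ ^ 2
      = (∑ i, w i) * ‖Y - Xbar‖ ^ 2 + ∑ i, w i * ‖Xbar - Xs i‖ ^ 2 := by
  set D := Y - Xbar with hD
  have expand : ∀ i, ‖Y - Xs i‖ ^ 2
      = ‖D‖ ^ 2 + 2 * tslInner D (Xbar - Xs i) + ‖Xbar - Xs i‖ ^ 2 := by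
    intro i
    have hYX : Y - Xs i = D + (Xbar - Xs i) := by rw [hD]; abel
    rw [hYX, tslInner_self, tslInner_self, tslInner_self]
    set E := Xbar - Xs i
    have : tslInner (D + E) (D + E)
        = tslInner (D + E) D + tslInner (D + E) E := tslInner_add_right _ _ _
    rw [this, tslInner_comm (D + E) D, tslInner_comm (D + E) E,
      tslInner_add_right, tslInner_add_right, tslInner_comm E D]
    ring
  calc ∑ i, w i * ‖Y - Xs i‖ ^ 2
      = ∑ i, (w i * ‖D‖ ^ 2 + 2 * tslInner D (w i • (Xbar - Xs i)) + w i * ‖Xbar - Xs i‖ ^ 2) := by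
        refine Finset.sum_congr rfl fun i _ => ?_
        rw [expand i, tslInner_smul_right]
        ring
    _ = (∑ i, w i) * ‖D‖ ^ 2 + 2 * tslInner D (∑ i, w i • (Xbar - Xs i))
          + ∑ i, w i * ‖Xbar - Xs i‖ ^ 2 := by
        rw [Finset.sum_add_distrib, Finset.sum_add_distrib, tslInner_sum_right,
          Finset.sum_mul, Finset.mul_sum]
    _ = (∑ i, w i) * ‖D‖ ^ 2 + ∑ i, w i * ‖Xbar - Xs i‖ ^ 2 := by
        rw [h0, tslInner_zero_right]
        ring

lemma tsl_sum_mulVec {N m : ℕ} (A : Fin m → Matrix (Fin N) (Fin N) ℂ) (x : Fin N → ℂ) :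
    (∑ i, A i) *ᵥ x = ∑ i, A i *ᵥ x := by
  ext j
  simp [mulVec, dotProduct, Finset.sum_mul, Finset.sum_apply, Matrix.sum_apply]
  rw [Finset.sum_comm]

/-- The general combination lemma. -/
lemma tsl_aux {N m : ℕ} (hm : 0 < m) (Xs : Fin m → Matrix (Fin N) (Fin N) ℂ)
    (hXs : ∀ i, (Xs i).PosDef) (w : Fin m → ℝ) (hw : ∀ i, 0 < w i) :
    ((∑ j, w j)⁻¹ • ∑ i, w i • Xs i).PosDef ∧
    ∀ Y : Matrix (Fin N) (Fin N) ℂ, Y ≠ (∑ j, w j)⁻¹ • ∑ i, w i • Xs i →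
      ∑ i, w i * ‖((∑ j, w j)⁻¹ • ∑ k, w k • Xs k) - Xs i‖ ^ 2
        < ∑ i, w i * ‖Y - Xs i‖ ^ 2 := by
  have hne : (Finset.univ : Finset (Fin m)).Nonempty := by
    simpa [Finset.univ_nonempty_iff] using Fin.pos_iff_nonempty.mp hm
  have hW : 0 < ∑ j, w j := Finset.sum_pos (fun i _ => hw i) hne
  set W : ℝ := ∑ j, w j with hWdef
  set S : Matrix (Fin N) (Fin N) ℂ := ∑ i, w i • Xs i with hSdef
  set Xbar : Matrix (Fin N) (Fin N) ℂ := W⁻¹ • S with hXbar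
  have h0 : ∑ i, w i • (Xbar - Xs i) = 0 := by
    have : ∑ i, w i • (Xbar - Xs i) = (∑ i, w i) • Xbar - S := by
      rw [Finset.sum_smul, hSdef, ← Finset.sum_sub_distrib]
      refine Finset.sum_congr rfl fun i _ => ?_
      rw [smul_sub]
    rw [this, ← hWdef, hXbar, smul_smul, mul_inv_cancel₀ hW.ne', one_smul, sub_self]
  constructor
  · rw [posDef_iff_dotProduct_mulVec]
    constructor
    · have hterm : ∀ i, (w i • Xs i)ᴴ = w i • Xs i := fun i => by
        rw [conjTranspose_smul, star_trivial, (hXs i).1.eq]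
      show Xbarᴴ = Xbar
      rw [hXbar, conjTranspose_smul, star_trivial, hSdef, conjTranspose_sum]
      congr 1
      exact Finset.sum_congr rfl fun i _ => hterm i
    · intro x hx
      have hmv : Xbar *ᵥ x = W⁻¹ • (S *ᵥ x) := by
        rw [hXbar, Matrix.smul_mulVec]
      have hS : S *ᵥ x = ∑ i, w i • (Xs i *ᵥ x) := by
        rw [hSdef, tsl_sum_mulVec]
        refine Finset.sum_congr rfl fun i _ => ?_
        rw [Matrix.smul_mulVec]
      have hdsum : ∀ v : Fin m → (Fin N → ℂ), star x ⬝ᵥ (∑ i, v i) = ∑ i, star x ⬝ᵥ v i := by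
        intro v
        simp only [dotProduct, Finset.sum_apply, Finset.mul_sum]
        exact Finset.sum_comm
      rw [hmv, dotProduct_smul, hS, hdsum]
      refine smul_pos (inv_pos.mpr hW) (Finset.sum_pos (fun i _ => ?_) hne)
      rw [dotProduct_smul]
      exact smul_pos (hw i) ((hXs i).dotProduct_mulVec_pos hx)
  · intro Y hY
    have hkeyY := tsl_key w Xs Y Xbar h0
    have hDpos : 0 < ‖Y - Xbar‖ ^ 2 :=
      pow_pos (norm_pos_iff.mpr (sub_ne_zero.mpr hY)) 2
    rw [hkeyY]
    nlinarith [mul_pos hW hDpos]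

/-- For `F(X) = ½‖X‖²`, the unique minimizer over Hermitian matrices of
`X ↦ ∑ᵢ δ_F(X, Xᵢ)` with `δ_F(X,Y) = ½‖X-Y‖²/√(1+‖Y‖²)` is the total-square-loss mean
`X̄_TSL = (∑ᵢ Xᵢ/√(1+‖Xᵢ‖²)) / (∑ⱼ 1/√(1+‖Xⱼ‖²))`; being a convex combination of the
`Xᵢ`, it is Hermitian positive-definite when all `Xᵢ` are. -/
theorem tsl_mean {N m : ℕ} (hm : 0 < m)
    (Xs : Fin m → Matrix (Fin N) (Fin N) ℂ) (hXs : ∀ i, (Xs i).PosDef) :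
    ((∑ j, (Real.sqrt (1 + ‖Xs j‖ ^ 2))⁻¹)⁻¹ •
        ∑ i, (Real.sqrt (1 + ‖Xs i‖ ^ 2))⁻¹ • Xs i).PosDef ∧
    ∀ Y : Matrix (Fin N) (Fin N) ℂ, Y.IsHermitian →
      Y ≠ (∑ j, (Real.sqrt (1 + ‖Xs j‖ ^ 2))⁻¹)⁻¹ •
            ∑ i, (Real.sqrt (1 + ‖Xs i‖ ^ 2))⁻¹ • Xs i →
      (∑ i, (1 / 2 : ℝ) * ‖((∑ j, (Real.sqrt (1 + ‖Xs j‖ ^ 2))⁻¹)⁻¹ •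
              ∑ k, (Real.sqrt (1 + ‖Xs k‖ ^ 2))⁻¹ • Xs k) - Xs i‖ ^ 2 /
            Real.sqrt (1 + ‖Xs i‖ ^ 2))
        < ∑ i, (1 / 2 : ℝ) * ‖Y - Xs i‖ ^ 2 / Real.sqrt (1 + ‖Xs i‖ ^ 2) := by
  have hs : ∀ i : Fin m, 0 < Real.sqrt (1 + ‖Xs i‖ ^ 2) := fun i =>
    Real.sqrt_pos.mpr (by positivity)
  have hw : ∀ i : Fin m, 0 < (Real.sqrt (1 + ‖Xs i‖ ^ 2))⁻¹ := fun i =>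
    inv_pos.mpr (hs i)
  obtain ⟨hpd, hmin⟩ := tsl_aux hm Xs hXs (fun i => (Real.sqrt (1 + ‖Xs i‖ ^ 2))⁻¹) hw
  refine ⟨hpd, fun Y _ hY => ?_⟩
  have h := hmin Y hY
  have rewr : ∀ Z : Matrix (Fin N) (Fin N) ℂ,
      ∑ i, (1 / 2 : ℝ) * ‖Z - Xs i‖ ^ 2 / Real.sqrt (1 + ‖Xs i‖ ^ 2)
        = (1 / 2 : ℝ) * ∑ i, (Real.sqrt (1 + ‖Xs i‖ ^ 2))⁻¹ * ‖Z - Xs i‖ ^ 2 := by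
    intro Z
    rw [Finset.mul_sum]
    refine Finset.sum_congr rfl fun i _ => ?_
    field_simp
  rw [rewr, rewr]
  linarith
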